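/- arXiv:1909.05334 — 8 statements merged into one kernel-verified Lean document; each statement's English description precedes it below -/
import Mathlib

section
/- Let X be a Banach space and X_d a BK-space with the canonical unit vectors as a Schauder basis. A sequence {x_n} ⊆ X is a Bessel sequence for X with respect to X_d (i.e., {f(x_n)} ∈ Y_d for all f ∈ X* and ‖{f(x_n)}‖_{Y_d} ≤ B‖f‖ for some B > 0) if and only if there exists a bounded linear operator T : X_d → X with T({c_n}) = Σ_{n=1}^∞ c_n x_n for all {c_n} ∈ X_d. -/
open Filter Topology

/- STATEMENT 7: {x_n} ⊆ X is a Bessel sequence for X with respect to Xd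
   (i.e. for each f ∈ X* the sequence {f(x_n)} lies in Y_d — equivalently it is of the
   form {g(e_n)} for some g ∈ Xd* — with ‖{f(x_n)}‖_{Y_d} = ‖g‖ ≤ B‖f‖) iff there is a
   bounded linear T : Xd → X with T({c_n}) = Σₙ c_n x_n for all {c_n} ∈ Xd. -/
theorem stmt7 {X Xd : Type*}
    [NormedAddCommGroup X] [NormedSpace ℝ X] [CompleteSpace X]
    [NormedAddCommGroup Xd] [NormedSpace ℝ Xd] [CompleteSpace Xd]
    (coord : ℕ → (Xd →L[ℝ] ℝ)) (e : ℕ → Xd)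
    (hcoord_e : ∀ k n, coord k (e n) = if k = n then (1 : ℝ) else 0)
    (hbasis : ∀ c : Xd,
      Tendsto (fun N => ∑ k ∈ Finset.range N, coord k c • e k) atTop (nhds c))
    (x : ℕ → X) :
    (∃ B : ℝ, 0 < B ∧ ∀ f : X →L[ℝ] ℝ, ∃ g : Xd →L[ℝ] ℝ,
        (∀ n, g (e n) = f (x n)) ∧ ‖g‖ ≤ B * ‖f‖) ↔
    (∃ T : Xd →L[ℝ] X, ∀ c : Xd,
        Tendsto (fun N => ∑ n ∈ Finset.range N, coord n c • x n) atTop (nhds (T c))) := by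
  constructor
  · rintro ⟨B, hB, hg⟩
    set S : ℕ → Xd → X := fun N c => ∑ n ∈ Finset.range N, coord n c • x n with hS
    set P : ℕ → Xd → Xd := fun N c => ∑ n ∈ Finset.range N, coord n c • e n with hP
    -- key identity: f (S N c) = g (P N c)
    have key : ∀ (f : X →L[ℝ] ℝ) (g : Xd →L[ℝ] ℝ), (∀ n, g (e n) = f (x n)) →
        ∀ N c, f (S N c) = g (P N c) := by
      intro f g hge N c
      simp only [hS, hP, map_sum, map_smul, smul_eq_mul, hge]
    -- dual bound on differences
    have hdiff : ∀ (c : Xd) (N M : ℕ), ‖S N c - S M c‖ ≤ B * ‖P N c - P M c‖ := by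
      intro c N M
      apply NormedSpace.norm_le_dual_bound ℝ _ (by positivity)
      intro f
      obtain ⟨g, hge, hgB⟩ := hg f
      have : f (S N c - S M c) = g (P N c - P M c) := by
        simp [map_sub, key f g hge]
      rw [this]
      calc ‖g (P N c - P M c)‖ ≤ ‖g‖ * ‖P N c - P M c‖ := g.le_opNorm _
        _ ≤ (B * ‖f‖) * ‖P N c - P M c‖ := by
            apply mul_le_mul_of_nonneg_right hgB (norm_nonneg _)
        _ = B * ‖P N c - P M c‖ * ‖f‖ := by ring
    have hbound : ∀ (c : Xd) (N : ℕ), ‖S N c‖ ≤ B * ‖P N c‖ := by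
      intro c N
      have := hdiff c N 0
      simpa [hS, hP] using this
    -- Cauchy, hence convergent
    have hcauchy : ∀ c : Xd, CauchySeq (fun N => S N c) := by
      intro c
      have hPc : CauchySeq (fun N => P N c) := (hbasis c).cauchySeq
      rw [Metric.cauchySeq_iff] at hPc ⊢
      intro ε hε
      obtain ⟨K, hK⟩ := hPc (ε / B) (by positivity)
      refine ⟨K, fun m hm n hn => ?_⟩
      have h1 := hK m hm n hn
      rw [dist_eq_norm] at h1 ⊢
      calc ‖S m c - S n c‖ ≤ B * ‖P m c - P n c‖ := hdiff c m n
        _ < B * (ε / B) := by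
            exact mul_lt_mul_of_pos_left h1 hB
        _ = ε := by field_simp
    have hlim : ∀ c : Xd, ∃ y : X, Tendsto (fun N => S N c) atTop (nhds y) :=
      fun c => cauchySeq_tendsto_of_complete (hcauchy c)
    choose T0 hT0 using hlim
    have hadd : ∀ c d : Xd, T0 (c + d) = T0 c + T0 d := by
      intro c d
      refine tendsto_nhds_unique (hT0 (c + d)) ?_
      have : (fun N => S N (c + d)) = fun N => S N c + S N d := by
        funext N
        simp [hS, map_add, add_smul, Finset.sum_add_distrib]
      rw [this]
      exact (hT0 c).add (hT0 d)
    have hsmul : ∀ (a : ℝ) (c : Xd), T0 (a • c) = a • T0 c := by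
      intro a c
      refine tendsto_nhds_unique (hT0 (a • c)) ?_
      have : (fun N => S N (a • c)) = fun N => a • S N c := by
        funext N
        simp [hS, Finset.smul_sum, smul_smul]
      rw [this]
      exact (hT0 c).const_smul a
    have hT0bound : ∀ c : Xd, ‖T0 c‖ ≤ B * ‖c‖ := by
      intro c
      refine le_of_tendsto_of_tendsto' (hT0 c).norm
        (((hbasis c).norm).const_mul B) (fun N => hbound c N)
    refine ⟨LinearMap.mkContinuous ⟨⟨T0, hadd⟩, hsmul⟩ B hT0bound, fun c => hT0 c⟩
  · rintro ⟨T, hT⟩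
    refine ⟨‖T‖ + 1, by positivity, fun f => ⟨f.comp T, ?_, ?_⟩⟩
    · intro n
      have hTe : T (e n) = x n := by
        refine tendsto_nhds_unique (hT (e n)) ?_
        have hev : (fun N => ∑ k ∈ Finset.range N, coord k (e n) • x k)
            =ᶠ[atTop] fun _ => x n := by
          filter_upwards [eventually_ge_atTop (n + 1)] with N hN
          have : ∀ k, coord k (e n) • x k = if k = n then x k else 0 := by
            intro k
            rw [hcoord_e]
            split <;> simp
          simp only [this, Finset.sum_ite_eq' (Finset.range N) n x]
          simp [Finset.mem_range, Nat.lt_of_lt_of_le (Nat.lt_succ_self n) hN]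
        exact Tendsto.congr' hev.symm tendsto_const_nhds
      simp [hTe]
    · calc ‖f.comp T‖ ≤ ‖f‖ * ‖T‖ := ContinuousLinearMap.opNorm_comp_le f T
        _ ≤ (‖T‖ + 1) * ‖f‖ := by nlinarith [norm_nonneg f, norm_nonneg T]
end

section
/- Let X be a Banach space, K ∈ L(X), and let {x_n} be an approximative atomic system for K with associated approximative X_d-Bessel sequence {h_{n,i}} (with Bessel bound B) and Bessel bound A for {x_n}. Then there exist constants C, D > 0 such that C‖K(x)‖ ≤ ‖{h_{n,i}(x)}‖_{X_d} for all x ∈ X, and D‖K*(h)‖ ≤ ‖{h(x_n)}‖_{Y_d} for all h ∈ X*. -/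
open Filter Topology

/-- The Banach-space adjoint of a bounded operator. -/
noncomputable def adjB {X Y : Type*} [NormedAddCommGroup X] [NormedSpace ℝ X]
    [NormedAddCommGroup Y] [NormedSpace ℝ Y] (T : X →L[ℝ] Y) :
    (Y →L[ℝ] ℝ) →L[ℝ] (X →L[ℝ] ℝ) :=
  (ContinuousLinearMap.compL ℝ X Y ℝ).flip T

/- STATEMENT 9: If {x_n} is an approximative atomic system for K ∈ L(X), with
   associated approximative Xd-Bessel sequence {h_{n,i}} (whose analysis operator S
   satisfies S x = lim_n Σ_{i=1}^{m_n} h_{n,i}(x) e_i, so ‖{h_{n,i}(x)}‖_{Xd} = ‖S x‖,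
   and ‖S x‖ ≤ B‖x‖) and {x_n} Bessel with bound A, then there exist C, D > 0 with
   C‖K x‖ ≤ ‖{h_{n,i}(x)}‖_{Xd} for all x ∈ X and
   D‖K* f‖ ≤ ‖{f(x_n)}‖_{Y_d} for all f ∈ X*. -/
theorem stmt9 {X Xd : Type*}
    [NormedAddCommGroup X] [NormedSpace ℝ X] [CompleteSpace X]
    [NormedAddCommGroup Xd] [NormedSpace ℝ Xd] [CompleteSpace Xd]
    (coord : ℕ → (Xd →L[ℝ] ℝ)) (e : ℕ → Xd)
    (hcoord_e : ∀ k n, coord k (e n) = if k = n then (1 : ℝ) else 0)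
    (hbasis : ∀ c : Xd,
      Tendsto (fun N => ∑ k ∈ Finset.range N, coord k c • e k) atTop (nhds c))
    (x : ℕ → X) (K : X →L[ℝ] X)
    -- {x_n} is a Bessel sequence with bound A
    (A : ℝ) (hA : 0 < A)
    (hBessel : ∀ f : X →L[ℝ] ℝ, ∃ g : Xd →L[ℝ] ℝ,
        (∀ n, g (e n) = f (x n)) ∧ ‖g‖ ≤ A * ‖f‖)
    -- {h_{n,i}} is an approximative Xd-Bessel sequence with bound B,
    -- with analysis operator S
    (m : ℕ → ℕ) (hm : StrictMono m) (hm0 : 0 < m 0)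
    (h : ℕ → ℕ → (X →L[ℝ] ℝ)) (S : X →L[ℝ] Xd)
    (hS : ∀ z : X,
      Tendsto (fun n => ∑ i ∈ Finset.range (m n), h n i z • e i) atTop (nhds (S z)))
    (B : ℝ) (hB : 0 < B) (hSB : ∀ z : X, ‖S z‖ ≤ B * ‖z‖)
    -- K(x) = lim_n Σ_{i=1}^{m_n} h_{n,i}(x) x_i
    (hKexp : ∀ z : X,
      Tendsto (fun n => ∑ i ∈ Finset.range (m n), h n i z • x i) atTop (nhds (K z))) :
    (∃ C : ℝ, 0 < C ∧ ∀ z : X, C * ‖K z‖ ≤ ‖S z‖) ∧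
    (∃ D : ℝ, 0 < D ∧ ∀ (f : X →L[ℝ] ℝ) (g : Xd →L[ℝ] ℝ),
        (∀ n, g (e n) = f (x n)) → D * ‖adjB K f‖ ≤ ‖g‖) := by
  have key : ∀ (f : X →L[ℝ] ℝ) (g : Xd →L[ℝ] ℝ), (∀ n, g (e n) = f (x n)) →
      ∀ z : X, f (K z) = g (S z) := by
    intro f g hg z
    have h1 : Tendsto (fun n => g (∑ i ∈ Finset.range (m n), h n i z • e i))
        atTop (nhds (g (S z))) := (g.continuous.tendsto _).comp (hS z)
    have h2 : (fun n => g (∑ i ∈ Finset.range (m n), h n i z • e i)) =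
        fun n => f (∑ i ∈ Finset.range (m n), h n i z • x i) := by
      funext n; simp [map_sum, hg]
    rw [h2] at h1
    have h3 : Tendsto (fun n => f (∑ i ∈ Finset.range (m n), h n i z • x i))
        atTop (nhds (f (K z))) := (f.continuous.tendsto _).comp (hKexp z)
    exact (tendsto_nhds_unique h3 h1)
  constructor
  · refine ⟨A⁻¹, by positivity, fun z => ?_⟩
    rw [inv_mul_le_iff₀ hA]
    have : ‖K z‖ ≤ A * ‖S z‖ := by
      refine NormedSpace.norm_le_dual_bound ℝ (K z) (by positivity) (fun f => ?_)
      obtain ⟨g, hg, hgA⟩ := hBessel f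
      calc ‖f (K z)‖ = ‖g (S z)‖ := by rw [key f g hg z]
        _ ≤ ‖g‖ * ‖S z‖ := g.le_opNorm _
        _ ≤ (A * ‖f‖) * ‖S z‖ := by
            exact mul_le_mul_of_nonneg_right hgA (norm_nonneg _)
        _ = A * ‖S z‖ * ‖f‖ := by ring
    linarith
  · refine ⟨B⁻¹, by positivity, fun f g hg => ?_⟩
    rw [inv_mul_le_iff₀ hB]
    refine ContinuousLinearMap.opNorm_le_bound _ (by positivity) (fun z => ?_)
    have hz : (adjB K f) z = f (K z) := rfl
    calc ‖(adjB K f) z‖ = ‖g (S z)‖ := by rw [hz, key f g hg z]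
      _ ≤ ‖g‖ * ‖S z‖ := g.le_opNorm _
      _ ≤ ‖g‖ * (B * ‖z‖) := mul_le_mul_of_nonneg_left (hSB z) (norm_nonneg _)
      _ = B * ‖g‖ * ‖z‖ := by ring
end

section
/- Let X be a Banach space, M ⊆ X a closed subspace, and {x_n} an approximative family of local atoms for M with associated approximative X_d-Bessel sequence {h_{n,i}} (Bessel bound B), and let A be the Bessel bound of {x_n}. Then for all x ∈ M, ‖x‖ ≤ A‖{h_{n,i}(x)}‖_{X_d}, and for all f ∈ M*, (1/B)‖f‖ ≤ ‖{f(x_n)}‖; in particular {x_n} is a frame for M and ({x_n}, {h_{n,i}}) is an approximative atomic decomposition for M. -/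
open Filter Topology

/- STATEMENT 10: Let {x_n} be an approximative family of local atoms for a closed
   subspace M with associated approximative Xd-Bessel sequence {h_{n,i}} (bound B,
   analysis operator S, so ‖{h_{n,i}(x)}‖_{Xd} = ‖S x‖) and Bessel bound A for {x_n}.
   Then ‖x‖ ≤ A‖{h_{n,i}(x)}‖ for all x ∈ M and (1/B)‖f|_M‖ ≤ ‖{f(x_n)}‖_{Y_d} for all
   f ∈ M*; in particular {x_n} is a frame for M and ({x_n},{h_{n,i}}) an approximative
   atomic decomposition for M. -/
theorem stmt10 {X Xd : Type*}
    [NormedAddCommGroup X] [NormedSpace ℝ X] [CompleteSpace X]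
    [NormedAddCommGroup Xd] [NormedSpace ℝ Xd] [CompleteSpace Xd]
    (coord : ℕ → (Xd →L[ℝ] ℝ)) (e : ℕ → Xd)
    (hcoord_e : ∀ k n, coord k (e n) = if k = n then (1 : ℝ) else 0)
    (hbasis : ∀ c : Xd,
      Tendsto (fun N => ∑ k ∈ Finset.range N, coord k c • e k) atTop (nhds c))
    (x : ℕ → X) (M : Submodule ℝ X) (hM : IsClosed (M : Set X))
    -- {x_n} is a Bessel sequence with bound A
    (A : ℝ) (hA : 0 < A)
    (hBessel : ∀ f : X →L[ℝ] ℝ, ∃ g : Xd →L[ℝ] ℝ,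
        (∀ n, g (e n) = f (x n)) ∧ ‖g‖ ≤ A * ‖f‖)
    -- {h_{n,i}} is an approximative Xd-Bessel sequence for M with bound B,
    -- with analysis operator S
    (m : ℕ → ℕ) (hm : StrictMono m) (hm0 : 0 < m 0)
    (h : ℕ → ℕ → (X →L[ℝ] ℝ)) (S : X →L[ℝ] Xd)
    (hS : ∀ z ∈ M,
      Tendsto (fun n => ∑ i ∈ Finset.range (m n), h n i z • e i) atTop (nhds (S z)))
    (B : ℝ) (hB : 0 < B) (hSB : ∀ z ∈ M, ‖S z‖ ≤ B * ‖z‖)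
    -- x = lim_n Σ_{i=1}^{m_n} h_{n,i}(x) x_i for all x ∈ M
    (hexp : ∀ z ∈ M,
      Tendsto (fun n => ∑ i ∈ Finset.range (m n), h n i z • x i) atTop (nhds z)) :
    (∀ z ∈ M, ‖z‖ ≤ A * ‖S z‖) ∧
    (∀ (f : X →L[ℝ] ℝ) (g : Xd →L[ℝ] ℝ), (∀ n, g (e n) = f (x n)) →
      (1 / B) * ‖f.comp M.subtypeL‖ ≤ ‖g‖) := by
  have key : ∀ (f : X →L[ℝ] ℝ) (g : Xd →L[ℝ] ℝ), (∀ n, g (e n) = f (x n)) →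
      ∀ z ∈ M, f z = g (S z) := by
    intro f g hg z hz
    have h1 : Tendsto (fun n => f (∑ i ∈ Finset.range (m n), h n i z • x i)) atTop
        (nhds (f z)) := (f.continuous.tendsto z).comp (hexp z hz)
    have h2 : Tendsto (fun n => g (∑ i ∈ Finset.range (m n), h n i z • e i)) atTop
        (nhds (g (S z))) := (g.continuous.tendsto _).comp (hS z hz)
    have heq : (fun n => f (∑ i ∈ Finset.range (m n), h n i z • x i))
        = fun n => g (∑ i ∈ Finset.range (m n), h n i z • e i) := by
      funext n; simp [map_sum, map_smul, hg]
    rw [heq] at h1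
    exact tendsto_nhds_unique h1 h2
  refine ⟨?_, ?_⟩
  · intro z hz
    rcases eq_or_ne z 0 with rfl | hz0
    · simpa using mul_nonneg hA.le (norm_nonneg (S 0))
    · obtain ⟨f, hf1, hfz⟩ := exists_dual_vector ℝ z (norm_ne_zero_iff.mpr hz0)
      obtain ⟨g, hg, hgA⟩ := hBessel f
      have hfg := key f g hg z hz
      have hzeq : ‖z‖ = g (S z) := by
        rw [← hfg]
        exact_mod_cast hfz.symm
      calc ‖z‖ = g (S z) := hzeq
        _ ≤ ‖g‖ * ‖S z‖ := le_trans (le_abs_self _) (g.le_opNorm _)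
        _ ≤ A * ‖S z‖ := by
            rw [hf1, mul_one] at hgA
            exact mul_le_mul_of_nonneg_right hgA (norm_nonneg _)
  · intro f g hg
    have hb : ‖f.comp M.subtypeL‖ ≤ B * ‖g‖ := by
      apply ContinuousLinearMap.opNorm_le_bound _ (by positivity)
      intro z
      have hfg := key f g hg (z : X) z.2
      calc ‖(f.comp M.subtypeL) z‖ = ‖g (S (z : X))‖ := by
            simp only [ContinuousLinearMap.comp_apply, Submodule.subtypeL_apply]
            rw [hfg]
        _ ≤ ‖g‖ * ‖S (z : X)‖ := g.le_opNorm _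
        _ ≤ ‖g‖ * (B * ‖(z : X)‖) :=
            mul_le_mul_of_nonneg_left (hSB _ z.2) (norm_nonneg _)
        _ = B * ‖g‖ * ‖z‖ := by rw [Submodule.norm_coe]; ring
    rw [one_div, inv_mul_le_iff₀ hB]
    exact hb
end

section
/- Let {x_n} be an approximative atomic system for K ∈ L(X) in a Banach space X, and suppose K has a pseudo-inverse K†. Then {x_n} is an approximative family of local atoms for the subspace K(X): setting f_{n,i} = (K†|_{K(X)})*(h_{n,i}), the sequence {f_{n,i}} is an approximative X_d-Bessel sequence for K(X) and x = lim_{n→∞} Σ_{i=1}^{m_n} f_{n,i}(x) x_i for all x ∈ K(X). -/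
open Filter Topology

/- STATEMENT 11: If {x_n} is an approximative atomic system for K (associated
   approximative Xd-Bessel sequence {h_{n,i}} with bound C and analysis operator S)
   and K has a pseudo-inverse K†, then {x_n} is an approximative family of local atoms
   for K(X): with f_{n,i} = (K†|_{K(X)})*(h_{n,i}), i.e. f_{n,i}(y) = h_{n,i}(K† y),
   one has y = lim_n Σ_{i=1}^{m_n} f_{n,i}(y) x_i for all y ∈ K(X), and {f_{n,i}} is an
   approximative Xd-Bessel sequence for K(X) with bound C‖K†‖. -/
theorem stmt11 {X Xd : Type*}
    [NormedAddCommGroup X] [NormedSpace ℝ X] [CompleteSpace X]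
    [NormedAddCommGroup Xd] [NormedSpace ℝ Xd] [CompleteSpace Xd]
    (coord : ℕ → (Xd →L[ℝ] ℝ)) (e : ℕ → Xd)
    (hcoord_e : ∀ k n, coord k (e n) = if k = n then (1 : ℝ) else 0)
    (hbasis : ∀ c : Xd,
      Tendsto (fun N => ∑ k ∈ Finset.range N, coord k c • e k) atTop (nhds c))
    (x : ℕ → X) (K Kd : X →L[ℝ] X)
    -- K† is a pseudo-inverse of K
    (hKd : K.comp (Kd.comp K) = K)
    -- {x_n} is a Bessel sequence
    (A : ℝ) (hBessel : ∀ f : X →L[ℝ] ℝ, ∃ g : Xd →L[ℝ] ℝ,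
        (∀ n, g (e n) = f (x n)) ∧ ‖g‖ ≤ A * ‖f‖)
    -- associated approximative Xd-Bessel sequence {h_{n,i}} with bound C and
    -- analysis operator S
    (m : ℕ → ℕ) (hm : StrictMono m) (hm0 : 0 < m 0)
    (h : ℕ → ℕ → (X →L[ℝ] ℝ)) (S : X →L[ℝ] Xd)
    (hS : ∀ z : X,
      Tendsto (fun n => ∑ i ∈ Finset.range (m n), h n i z • e i) atTop (nhds (S z)))
    (C : ℝ) (hC : 0 < C) (hSC : ∀ z : X, ‖S z‖ ≤ C * ‖z‖)
    -- K(x) = lim_n Σ_{i=1}^{m_n} h_{n,i}(x) x_i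
    (hKexp : ∀ z : X,
      Tendsto (fun n => ∑ i ∈ Finset.range (m n), h n i z • x i) atTop (nhds (K z))) :
    ∀ y ∈ LinearMap.range (K : X →ₗ[ℝ] X),
      -- reconstruction on K(X) with the functionals f_{n,i} = h_{n,i} ∘ K†
      Tendsto (fun n => ∑ i ∈ Finset.range (m n), h n i (Kd y) • x i) atTop (nhds y) ∧
      -- {f_{n,i}} is an approximative Xd-Bessel sequence for K(X), with analysis
      -- operator S ∘ K† and bound C‖K†‖
      Tendsto (fun n => ∑ i ∈ Finset.range (m n), h n i (Kd y) • e i) atTop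
        (nhds (S (Kd y))) ∧
      ‖S (Kd y)‖ ≤ C * ‖Kd‖ * ‖y‖ := by
  intro y hy
  obtain ⟨z, hz⟩ := hy
  have hy' : K (Kd y) = y := by
    rw [← hz]
    have := congrArg (fun T : X →L[ℝ] X => T z) hKd
    simpa using this
  refine ⟨?_, hS (Kd y), ?_⟩
  · have := hKexp (Kd y)
    rwa [hy'] at this
  · calc ‖S (Kd y)‖ ≤ C * ‖Kd y‖ := hSC (Kd y)
      _ ≤ C * (‖Kd‖ * ‖y‖) := by
          exact mul_le_mul_of_nonneg_left (Kd.le_opNorm y) hC.le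
      _ = C * ‖Kd‖ * ‖y‖ := by ring
end

section
/- If {x_n} is an approximative atomic system for K ∈ L(X) in a Banach space X with respect to X_d, then there exists a bounded linear operator T : X_d → X with T(e_n) = x_n for all n, and range(K**) ⊆ range(T**), where K** and T** are the second adjoints. -/
open Filter Topology

lemma adjB_comp {X Y Z : Type*} [NormedAddCommGroup X] [NormedSpace ℝ X]
    [NormedAddCommGroup Y] [NormedSpace ℝ Y]
    [NormedAddCommGroup Z] [NormedSpace ℝ Z] (T : Y →L[ℝ] Z) (S : X →L[ℝ] Y) :
    adjB (T.comp S) = (adjB S).comp (adjB T) := by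
  ext f x; rfl

/- STATEMENT 13: If {x_n} is an approximative atomic system for K ∈ L(X) with respect
   to Xd, then there is a bounded linear T : Xd → X with T(e_n) = x_n for all n and
   range(K**) ⊆ range(T**). -/
theorem stmt13 {X Xd : Type*}
    [NormedAddCommGroup X] [NormedSpace ℝ X] [CompleteSpace X]
    [NormedAddCommGroup Xd] [NormedSpace ℝ Xd] [CompleteSpace Xd]
    (coord : ℕ → (Xd →L[ℝ] ℝ)) (e : ℕ → Xd)
    (hcoord_e : ∀ k n, coord k (e n) = if k = n then (1 : ℝ) else 0)
    (hbasis : ∀ c : Xd,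
      Tendsto (fun N => ∑ k ∈ Finset.range N, coord k c • e k) atTop (nhds c))
    (x : ℕ → X) (K : X →L[ℝ] X)
    -- {x_n} is a Bessel sequence for X with respect to Xd
    (A : ℝ) (hBessel : ∀ f : X →L[ℝ] ℝ, ∃ g : Xd →L[ℝ] ℝ,
        (∀ n, g (e n) = f (x n)) ∧ ‖g‖ ≤ A * ‖f‖)
    -- {h_{n,i}} is an associated approximative Xd-Bessel sequence (bound B,
    -- analysis operator S) with K(x) = lim_n Σ_{i=1}^{m_n} h_{n,i}(x) x_i
    (m : ℕ → ℕ) (hm : StrictMono m) (hm0 : 0 < m 0)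
    (h : ℕ → ℕ → (X →L[ℝ] ℝ)) (S : X →L[ℝ] Xd)
    (hS : ∀ z : X,
      Tendsto (fun n => ∑ i ∈ Finset.range (m n), h n i z • e i) atTop (nhds (S z)))
    (B : ℝ) (hB : 0 < B) (hSB : ∀ z : X, ‖S z‖ ≤ B * ‖z‖)
    (hKexp : ∀ z : X,
      Tendsto (fun n => ∑ i ∈ Finset.range (m n), h n i z • x i) atTop (nhds (K z))) :
    ∃ T : Xd →L[ℝ] X, (∀ n, T (e n) = x n) ∧
      Set.range (adjB (adjB K)) ⊆ Set.range (adjB (adjB T)) := by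
  classical
  set A' : ℝ := max A 0 with hA'
  have hA'0 : 0 ≤ A' := le_max_right _ _
  -- partial sum operators
  set P : ℕ → (Xd →L[ℝ] Xd) :=
    fun N => ∑ k ∈ Finset.range N, (coord k).smulRight (e k) with hP
  set TN : ℕ → (Xd →L[ℝ] X) :=
    fun N => ∑ k ∈ Finset.range N, (coord k).smulRight (x k) with hTN
  have hPapp : ∀ N c, P N c = ∑ k ∈ Finset.range N, coord k c • e k := by
    intro N c; simp [hP, ContinuousLinearMap.sum_apply]
  have hTNapp : ∀ N c, TN N c = ∑ k ∈ Finset.range N, coord k c • x k := by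
    intro N c; simp [hTN, ContinuousLinearMap.sum_apply]
  -- uniform bound on P via Banach–Steinhaus
  obtain ⟨C0, hC0⟩ : ∃ C', ∀ N, ‖P N‖ ≤ C' := by
    apply banach_steinhaus
    intro c
    have := ((hbasis c).norm).bddAbove_range
    obtain ⟨M, hM⟩ := this
    exact ⟨M, fun N => by
      have := hM ⟨N, rfl⟩
      simpa [hPapp] using this⟩
  set C : ℝ := max C0 0 with hC
  have hPn : ∀ N c, ‖P N c‖ ≤ C * ‖c‖ := by
    intro N c
    calc ‖P N c‖ ≤ ‖P N‖ * ‖c‖ := (P N).le_opNorm c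
    _ ≤ C * ‖c‖ := by
        apply mul_le_mul_of_nonneg_right ((hC0 N).trans (le_max_left _ _)) (norm_nonneg _)
  -- key estimate over any finset
  have key : ∀ (s : Finset ℕ) (c : Xd),
      ‖∑ k ∈ s, coord k c • x k‖ ≤ A' * ‖∑ k ∈ s, coord k c • e k‖ := by
    intro s c
    apply NormedSpace.norm_le_dual_bound ℝ _ (mul_nonneg hA'0 (norm_nonneg _))
    intro f
    obtain ⟨g, hg1, hg2⟩ := hBessel f
    have hf : f (∑ k ∈ s, coord k c • x k) = g (∑ k ∈ s, coord k c • e k) := by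
      simp [map_sum, hg1]
    rw [hf]
    calc ‖g (∑ k ∈ s, coord k c • e k)‖ ≤ ‖g‖ * ‖∑ k ∈ s, coord k c • e k‖ :=
          g.le_opNorm _
    _ ≤ (A * ‖f‖) * ‖∑ k ∈ s, coord k c • e k‖ :=
          mul_le_mul_of_nonneg_right hg2 (norm_nonneg _)
    _ ≤ (A' * ‖f‖) * ‖∑ k ∈ s, coord k c • e k‖ := by
          apply mul_le_mul_of_nonneg_right _ (norm_nonneg _)
          exact mul_le_mul_of_nonneg_right (le_max_left _ _) (norm_nonneg _)
    _ = A' * ‖∑ k ∈ s, coord k c • e k‖ * ‖f‖ := by ring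
  -- difference estimate
  have hdiff : ∀ (M N : ℕ), M ≤ N → ∀ c, ‖TN N c - TN M c‖ ≤ A' * ‖P N c - P M c‖ := by
    intro M N hMN c
    have hsub : Finset.range M ⊆ Finset.range N := Finset.range_subset_range.2 hMN
    have h1 : TN N c - TN M c = ∑ k ∈ Finset.range N \ Finset.range M, coord k c • x k := by
      rw [hTNapp, hTNapp, eq_comm, Finset.sum_sdiff_eq_sub hsub]
    have h2 : P N c - P M c = ∑ k ∈ Finset.range N \ Finset.range M, coord k c • e k := by
      rw [hPapp, hPapp, eq_comm, Finset.sum_sdiff_eq_sub hsub]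
    rw [h1, h2]; exact key _ c
  -- Cauchy, hence convergent
  have hconv : ∀ c : Xd, ∃ l : X, Tendsto (fun N => TN N c) atTop (nhds l) := by
    intro c
    apply cauchySeq_tendsto_of_complete
    rw [Metric.cauchySeq_iff']
    intro ε hε
    have hPc : CauchySeq (fun N => P N c) := by
      have := (hbasis c).cauchySeq
      simpa [hPapp] using this
    rw [Metric.cauchySeq_iff'] at hPc
    obtain ⟨N0, hN0⟩ := hPc (ε / (A' + 1)) (by positivity)
    refine ⟨N0, fun n hn => ?_⟩
    rw [dist_eq_norm]
    calc ‖TN n c - TN N0 c‖ ≤ A' * ‖P n c - P N0 c‖ := hdiff N0 n hn c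
    _ ≤ A' * (ε / (A' + 1)) := by
        apply mul_le_mul_of_nonneg_left _ hA'0
        have := hN0 n hn
        rw [dist_eq_norm] at this
        exact this.le
    _ < ε := by
        rw [div_eq_inv_mul, ← mul_assoc]
        have h1 : A' * (A' + 1)⁻¹ < 1 := by
          rw [mul_inv_lt_iff₀ (by positivity)]
          linarith
        calc A' * (A' + 1)⁻¹ * ε < 1 * ε := by
              exact mul_lt_mul_of_pos_right h1 hε
        _ = ε := one_mul ε
  choose Tf hTf using hconv
  -- linearity
  have hadd : ∀ c c', Tf (c + c') = Tf c + Tf c' := by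
    intro c c'
    refine tendsto_nhds_unique ?_ ((hTf c).add (hTf c'))
    have : (fun N => TN N (c + c')) = fun N => TN N c + TN N c' := by
      funext N; exact map_add (TN N) c c'
    rw [← this]; exact hTf _
  have hsmul : ∀ (r : ℝ) c, Tf (r • c) = r • Tf c := by
    intro r c
    refine tendsto_nhds_unique ?_ ((hTf c).const_smul r)
    have : (fun N => TN N (r • c)) = fun N => r • TN N c := by
      funext N; exact map_smul (TN N) r c
    rw [← this]; exact hTf _
  have hbound : ∀ c, ‖Tf c‖ ≤ A' * C * ‖c‖ := by
    intro c
    refine le_of_tendsto (hTf c).norm (Eventually.of_forall fun N => ?_)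
    calc ‖TN N c‖ ≤ A' * ‖P N c‖ := by
          have := hdiff 0 N (Nat.zero_le N) c
          simpa [hTNapp, hPapp] using this
    _ ≤ A' * (C * ‖c‖) := mul_le_mul_of_nonneg_left (hPn N c) hA'0
    _ = A' * C * ‖c‖ := by ring
  set T : Xd →L[ℝ] X :=
    LinearMap.mkContinuous
      { toFun := Tf, map_add' := hadd, map_smul' := hsmul } (A' * C) hbound with hT
  have hTapp : ∀ c, T c = Tf c := fun c => rfl
  -- T e n = x n
  have hTe : ∀ n, T (e n) = x n := by
    intro n
    rw [hTapp]
    refine tendsto_nhds_unique (hTf (e n)) ?_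
    have hev : ∀ᶠ N in atTop, TN N (e n) = x n := by
      filter_upwards [eventually_ge_atTop (n + 1)] with N hN
      rw [hTNapp]
      have : ∀ k ∈ Finset.range N, coord k (e n) • x k
          = if k = n then x k else 0 := by
        intro k _
        rw [hcoord_e]
        split <;> simp
      rw [Finset.sum_congr rfl this, Finset.sum_ite_eq' (Finset.range N) n x]
      simp [Finset.mem_range, Nat.lt_of_succ_le hN]
    exact Tendsto.congr' (by filter_upwards [hev] with N hN; exact hN.symm)
      tendsto_const_nhds
  -- K = T ∘ S
  have hKTS : K = T.comp S := by
    ext z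
    refine tendsto_nhds_unique (hKexp z) ?_
    have h1 : Tendsto (fun n => T (∑ i ∈ Finset.range (m n), h n i z • e i))
        atTop (nhds (T (S z))) := (T.continuous.tendsto (S z)).comp (hS z)
    have h2 : (fun n => T (∑ i ∈ Finset.range (m n), h n i z • e i))
        = fun n => ∑ i ∈ Finset.range (m n), h n i z • x i := by
      funext n
      rw [map_sum]
      exact Finset.sum_congr rfl fun i _ => by rw [map_smul, hTe]
    rw [h2] at h1
    exact h1
  refine ⟨T, hTe, ?_⟩
  rintro u ⟨v, rfl⟩
  refine ⟨adjB (adjB S) v, ?_⟩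
  rw [hKTS, adjB_comp, adjB_comp]
  rfl
end

section
/- Let X_d be a reflexive BK-space whose dual has the canonical unit vectors as basis, {x_n} ⊆ X, K ∈ L(X), and T : X_d → X a bounded linear operator with T(e_n) = x_n for all n. If range(K**) ⊆ range(T**) and the closure of T*(X*) is a complemented subspace of X_d*, then {x_n} is an approximative atomic system for K: there exists an approximative X_d-Bessel sequence {h_{n,i}} ⊆ X* such that K(x) = lim_{n→∞} Σ_{i=1}^{m_n} h_{n,i}(x) x_i for all x ∈ X. -/
open Filter Topology

set_option maxHeartbeats 1000000

/- STATEMENT 14: Suppose Xd is reflexive, its dual has the canonical unit vectors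
   (= coord n) as basis, T : Xd → X is bounded with T(e_n) = x_n,
   range(K**) ⊆ range(T**), and the closure of T*(X*) is complemented in Xd*.
   Then {x_n} is an approximative atomic system for K: {x_n} is Bessel for X and there
   is an approximative Xd-Bessel sequence {h_{n,i}} (with analysis operator S and bound
   B) with K(x) = lim_n Σ_{i=1}^{m_n} h_{n,i}(x) x_i for all x ∈ X. -/
theorem stmt14 {X Xd : Type*}
    [NormedAddCommGroup X] [NormedSpace ℝ X] [CompleteSpace X]
    [NormedAddCommGroup Xd] [NormedSpace ℝ Xd] [CompleteSpace Xd]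
    (coord : ℕ → (Xd →L[ℝ] ℝ)) (e : ℕ → Xd)
    (hcoord_e : ∀ k n, coord k (e n) = if k = n then (1 : ℝ) else 0)
    (hbasis : ∀ c : Xd,
      Tendsto (fun N => ∑ k ∈ Finset.range N, coord k c • e k) atTop (nhds c))
    -- {e_n*} is a basis of Xd*
    (hdualbasis : ∀ g : Xd →L[ℝ] ℝ,
      Tendsto (fun N => ∑ k ∈ Finset.range N, g (e k) • coord k) atTop (nhds g))
    -- Xd is reflexive
    (hrefl : ∀ Ψ : (Xd →L[ℝ] ℝ) →L[ℝ] ℝ, ∃ c : Xd, ∀ g : Xd →L[ℝ] ℝ, Ψ g = g c)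
    (x : ℕ → X) (K : X →L[ℝ] X) (T : Xd →L[ℝ] X)
    (hTe : ∀ n, T (e n) = x n)
    (hrange : Set.range (adjB (adjB K)) ⊆ Set.range (adjB (adjB T)))
    -- the closure of T*(X*) is complemented in Xd*
    (hcompl : ∃ Q : (Xd →L[ℝ] ℝ) →L[ℝ] (Xd →L[ℝ] ℝ),
        Q.comp Q = Q ∧ Set.range Q = closure (Set.range (adjB T))) :
    -- {x_n} is a Bessel sequence for X with respect to Xd
    (∃ A : ℝ, 0 < A ∧ ∀ f : X →L[ℝ] ℝ, ∃ g : Xd →L[ℝ] ℝ,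
        (∀ n, g (e n) = f (x n)) ∧ ‖g‖ ≤ A * ‖f‖) ∧
    -- and there is an approximative Xd-Bessel sequence {h_{n,i}} reconstructing K
    (∃ (m : ℕ → ℕ) (h : ℕ → ℕ → (X →L[ℝ] ℝ)) (S : X →L[ℝ] Xd) (B : ℝ),
      StrictMono m ∧ 0 < m 0 ∧ 0 < B ∧
      (∀ z : X,
        Tendsto (fun n => ∑ i ∈ Finset.range (m n), h n i z • e i) atTop (nhds (S z))) ∧
      (∀ z : X, ‖S z‖ ≤ B * ‖z‖) ∧
      (∀ z : X,
        Tendsto (fun n => ∑ i ∈ Finset.range (m n), h n i z • x i) atTop (nhds (K z)))) := by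
  classical
  obtain ⟨Q, hQidem, hQrange⟩ := hcompl
  -- separation lemmas from Hahn–Banach
  have sep : ∀ c : Xd, (∀ g : Xd →L[ℝ] ℝ, g c = 0) → c = 0 := fun c hc =>
    NormedSpace.eq_zero_of_forall_dual_eq_zero ℝ hc
  have sep' : ∀ c c' : Xd, (∀ g : Xd →L[ℝ] ℝ, g c = g c') → c = c' := by
    intro c c' hc
    have h0 : c - c' = 0 := sep _ (fun g => by simp [hc g])
    exact sub_eq_zero.mp h0
  have sepX : ∀ a b : X, (∀ f : X →L[ℝ] ℝ, f a = f b) → a = b := by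
    intro a b hab
    have h0 : a - b = 0 := NormedSpace.eq_zero_of_forall_dual_eq_zero ℝ
      (fun f => by simp [hab f])
    exact sub_eq_zero.mp h0
  -- Q acts as identity on elements of the closure of range (adjB T)
  have hQid : ∀ u : Xd →L[ℝ] ℝ, u ∈ closure (Set.range (adjB T)) → Q u = u := by
    intro u hu
    rw [← hQrange] at hu
    obtain ⟨v, hv⟩ := hu
    have := congrFun (congrArg (fun (W : (Xd →L[ℝ] ℝ) →L[ℝ] (Xd →L[ℝ] ℝ)) => (W : (Xd →L[ℝ] ℝ) → (Xd →L[ℝ] ℝ))) hQidem) v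
    simpa [hv] using this
  have hQT : ∀ f : X →L[ℝ] ℝ, Q (adjB T f) = adjB T f := fun f =>
    hQid _ (subset_closure ⟨f, rfl⟩)
  -- range K ⊆ range T
  have hKT : ∀ z : X, ∃ c : Xd, T c = K z := by
    intro z
    have hmem : (NormedSpace.inclusionInDoubleDual ℝ X (K z)) ∈
        Set.range (adjB (adjB T)) := by
      apply hrange
      refine ⟨NormedSpace.inclusionInDoubleDual ℝ X z, ?_⟩
      ext f
      rfl
    obtain ⟨Φ, hΦ⟩ := hmem
    obtain ⟨c, hc⟩ := hrefl Φ
    refine ⟨c, sepX _ _ fun f => ?_⟩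
    have h1 : Φ (adjB T f) = f (K z) := by
      calc Φ (adjB T f) = (adjB (adjB T) Φ) f := rfl
        _ = (NormedSpace.inclusionInDoubleDual ℝ X (K z)) f := by rw [hΦ]
        _ = f (K z) := rfl
    have h2 : Φ (adjB T f) = f (T c) := hc (adjB T f)
    rw [← h1, h2]
  choose tc htc using hKT
  -- construct the projection P on Xd as the preadjoint of Q
  have hPex : ∀ c : Xd, ∃ c' : Xd, ∀ g : Xd →L[ℝ] ℝ, Q g c = g c' := by
    intro c
    obtain ⟨c', hc'⟩ := hrefl ((NormedSpace.inclusionInDoubleDual ℝ Xd c).comp Q)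
    exact ⟨c', fun g => hc' g⟩
  choose P₀ hP₀ using hPex
  have hP0 : ∀ (c : Xd) (g : Xd →L[ℝ] ℝ), g (P₀ c) = Q g c := fun c g => (hP₀ c g).symm
  have Pmapadd : ∀ a b : Xd, P₀ (a + b) = P₀ a + P₀ b := by
    intro a b
    refine sep' _ _ fun g => ?_
    simp [hP0, map_add]
  have Pmapsmul : ∀ (r : ℝ) (a : Xd), P₀ (r • a) = r • P₀ a := by
    intro r a
    refine sep' _ _ fun g => ?_
    simp [hP0, map_smul]
  set Plin : Xd →ₗ[ℝ] Xd :=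
    { toFun := P₀, map_add' := Pmapadd, map_smul' := Pmapsmul } with hPlin
  have Pbound : ∀ c : Xd, ‖Plin c‖ ≤ ‖Q‖ * ‖c‖ := by
    intro c
    refine NormedSpace.norm_le_dual_bound ℝ _ (by positivity) fun g => ?_
    have : g (P₀ c) = Q g c := hP0 c g
    show ‖g (P₀ c)‖ ≤ ‖Q‖ * ‖c‖ * ‖g‖
    rw [this]
    calc ‖Q g c‖ ≤ ‖Q g‖ * ‖c‖ := (Q g).le_opNorm c
      _ ≤ ‖Q‖ * ‖g‖ * ‖c‖ := by
          have := Q.le_opNorm g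
          have hc := norm_nonneg c
          nlinarith [norm_nonneg (Q g)]
      _ = ‖Q‖ * ‖c‖ * ‖g‖ := by ring
  set P : Xd →L[ℝ] Xd := Plin.mkContinuous ‖Q‖ Pbound with hPdef
  have hPapp : ∀ c, P c = P₀ c := fun c => rfl
  have hPval : ∀ (c : Xd) (g : Xd →L[ℝ] ℝ), g (P c) = Q g c := fun c g => hP0 c g
  -- T ∘ P = T
  have hTP : ∀ c : Xd, T (P c) = T c := by
    intro c
    refine sepX _ _ fun f => ?_
    have h1 : f (T (P c)) = (adjB T f) (P c) := rfl
    have h2 : (adjB T f) (P c) = Q (adjB T f) c := hPval c (adjB T f)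
    rw [h1, h2, hQT f]
    rfl
  -- T c = 0 → P c = 0
  have hker : ∀ c : Xd, T c = 0 → P c = 0 := by
    intro c hc
    refine sep _ fun g => ?_
    rw [hPval c g]
    have hmem : Q g ∈ closure (Set.range (adjB T)) := by
      rw [← hQrange]; exact ⟨g, rfl⟩
    have hsub : closure (Set.range (adjB T)) ⊆ {u : Xd →L[ℝ] ℝ | u c = 0} := by
      refine closure_minimal ?_ ?_
      · rintro u ⟨f, rfl⟩
        show f (T c) = 0
        rw [hc, map_zero]
      · have : Continuous fun u : Xd →L[ℝ] ℝ => u c :=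
          (ContinuousLinearMap.apply ℝ ℝ c).continuous
        exact isClosed_eq this continuous_const
    exact hsub hmem
  -- P is idempotent
  have hPP : ∀ c : Xd, P (P c) = P c := by
    intro c
    refine sep' _ _ fun g => ?_
    rw [hPval _ g, hPval c g, hPval c (Q g)]
    have := congrFun (congrArg (fun (W : (Xd →L[ℝ] ℝ) →L[ℝ] (Xd →L[ℝ] ℝ)) => (W : (Xd →L[ℝ] ℝ) → (Xd →L[ℝ] ℝ))) hQidem) g
    have h2 : Q (Q g) = Q g := by simpa using this
    rw [h2]
  -- define S₀
  set S₀ : X → Xd := fun z => P (tc z) with hS₀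
  have hTS : ∀ z : X, T (S₀ z) = K z := fun z => (hTP (tc z)).trans (htc z)
  have hPS : ∀ z : X, P (S₀ z) = S₀ z := fun z => hPP (tc z)
  have huniq : ∀ (z : X) (c : Xd), T c = K z → P c = c → c = S₀ z := by
    intro z c h1 h2
    have hT0 : T (c - S₀ z) = 0 := by rw [map_sub, h1, hTS, sub_self]
    have hp : P (c - S₀ z) = 0 := hker _ hT0
    have : c - S₀ z = 0 := by
      rw [map_sub, h2, hPS] at hp
      exact hp
    exact sub_eq_zero.mp this
  have Sadd : ∀ a b : X, S₀ (a + b) = S₀ a + S₀ b := by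
    intro a b
    refine (huniq (a + b) (S₀ a + S₀ b) ?_ ?_).symm
    · rw [map_add, hTS, hTS, map_add]
    · rw [map_add, hPS, hPS]
  have Ssmul : ∀ (r : ℝ) (a : X), S₀ (r • a) = r • S₀ a := by
    intro r a
    refine (huniq (r • a) (r • S₀ a) ?_ ?_).symm
    · rw [map_smul, hTS, map_smul]
    · rw [map_smul, hPS]
  set Slin : X →ₗ[ℝ] Xd := { toFun := S₀, map_add' := Sadd, map_smul' := Ssmul } with hSlin
  have hgraph : IsClosed (Slin.graph : Set (X × Xd)) := by
    have heq : (Slin.graph : Set (X × Xd)) =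
        {p : X × Xd | T p.2 = K p.1} ∩ {p : X × Xd | P p.2 = p.2} := by
      ext p
      constructor
      · intro hp
        have hp2 : p.2 = S₀ p.1 := (LinearMap.mem_graph_iff Slin p).mp hp
        constructor
        · show T p.2 = K p.1
          rw [hp2, hTS]
        · show P p.2 = p.2
          rw [hp2, hPS]
      · rintro ⟨h1, h2⟩
        exact (LinearMap.mem_graph_iff Slin p).mpr (huniq p.1 p.2 h1 h2)
    rw [heq]
    exact (isClosed_eq (T.continuous.comp continuous_snd) (K.continuous.comp continuous_fst)).inter
      (isClosed_eq (P.continuous.comp continuous_snd) continuous_snd)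
  have Scont : Continuous Slin := Slin.continuous_of_isClosed_graph hgraph
  set S : X →L[ℝ] Xd := ⟨Slin, Scont⟩ with hSdef
  have hSapp : ∀ z, S z = S₀ z := fun z => rfl
  constructor
  · -- Bessel sequence
    refine ⟨‖T‖ + 1, by positivity, fun f => ⟨f.comp T, fun n => ?_, ?_⟩⟩
    · rw [ContinuousLinearMap.comp_apply, hTe]
    · calc ‖f.comp T‖ ≤ ‖f‖ * ‖T‖ := ContinuousLinearMap.opNorm_comp_le f T
        _ ≤ (‖T‖ + 1) * ‖f‖ := by nlinarith [norm_nonneg f, norm_nonneg T]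
  · refine ⟨fun n => n + 1, fun n i => (coord i).comp S, S, ‖S‖ + 1,
      fun a b hab => Nat.succ_lt_succ hab, Nat.succ_pos 0, by positivity, ?_, ?_, ?_⟩
    · intro z
      have h1 : Tendsto (fun N => ∑ k ∈ Finset.range N, coord k (S z) • e k)
          atTop (nhds (S z)) := hbasis (S z)
      have h2 := h1.comp (tendsto_add_atTop_nat 1)
      exact h2
    · intro z
      calc ‖S z‖ ≤ ‖S‖ * ‖z‖ := S.le_opNorm z
        _ ≤ (‖S‖ + 1) * ‖z‖ := by nlinarith [norm_nonneg z, norm_nonneg S]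
    · intro z
      have h1 : Tendsto (fun N => ∑ k ∈ Finset.range N, coord k (S z) • e k)
          atTop (nhds (S z)) := hbasis (S z)
      have h2 := (T.continuous.tendsto (S z)).comp (h1.comp (tendsto_add_atTop_nat 1))
      have h3 : T (S z) = K z := hTS z
      rw [h3] at h2
      have heq : (fun n => ∑ i ∈ Finset.range (n + 1), ((coord i).comp S) z • x i)
          = fun n => T (∑ k ∈ Finset.range (n + 1), coord k (S z) • e k) := by
        funext n
        rw [map_sum]
        refine Finset.sum_congr rfl fun i _ => ?_
        rw [map_smul, hTe]
        rfl
      show Tendsto (fun n => ∑ i ∈ Finset.range (n + 1), ((coord i).comp S) z • x i)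
        atTop (nhds (K z))
      rw [heq]
      exact h2
end

section
/- Let {x_n} be a Bessel sequence for X with respect to X_d with synthesis operator T, let M be a closed subspace of X, and let P : X → X be a continuous projection onto M. Then the following are equivalent: (a) {x_n} is an approximative family of local atoms for M; (b) {x_n} is an approximative atomic system for P; (c) there exists a bounded linear operator U : M → X_d such that T∘U∘P = P. -/
open Filter Topology

/- STATEMENT 15: Let {x_n} be a Bessel sequence with synthesis operator T, M a closed
   subspace of X and P : X → X a continuous projection onto M.  TFAE:
   (a) {x_n} is an approximative family of local atoms for M;
   (b) {x_n} is an approximative atomic system for P;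
   (c) there is a bounded linear U : M → Xd with T∘U∘P = P. -/
theorem stmt15 {X Xd : Type*}
    [NormedAddCommGroup X] [NormedSpace ℝ X] [CompleteSpace X]
    [NormedAddCommGroup Xd] [NormedSpace ℝ Xd] [CompleteSpace Xd]
    (coord : ℕ → (Xd →L[ℝ] ℝ)) (e : ℕ → Xd)
    (hcoord_e : ∀ k n, coord k (e n) = if k = n then (1 : ℝ) else 0)
    (hbasis : ∀ c : Xd,
      Tendsto (fun N => ∑ k ∈ Finset.range N, coord k c • e k) atTop (nhds c))
    -- {e_n*} is a basis of Xd*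
    (hdualbasis : ∀ g : Xd →L[ℝ] ℝ,
      Tendsto (fun N => ∑ k ∈ Finset.range N, g (e k) • coord k) atTop (nhds g))
    (x : ℕ → X)
    -- T is the synthesis operator of the Bessel sequence {x_n}
    (T : Xd →L[ℝ] X)
    (hT : ∀ c : Xd,
      Tendsto (fun N => ∑ n ∈ Finset.range N, coord n c • x n) atTop (nhds (T c)))
    -- M a closed subspace, P a continuous projection of X onto M
    (M : Submodule ℝ X) (hM : IsClosed (M : Set X))
    (P : X →L[ℝ] X) (hPmem : ∀ z : X, P z ∈ M) (hPid : ∀ z ∈ M, P z = z) :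
    -- (a) ↔ (b)
    ((∃ (m : ℕ → ℕ) (h : ℕ → ℕ → (X →L[ℝ] ℝ)) (S : X →L[ℝ] Xd),
        StrictMono m ∧ 0 < m 0 ∧
        (∀ z ∈ M, Tendsto (fun n => ∑ i ∈ Finset.range (m n), h n i z • e i)
          atTop (nhds (S z))) ∧
        (∀ z ∈ M, Tendsto (fun n => ∑ i ∈ Finset.range (m n), h n i z • x i)
          atTop (nhds z))) ↔
      (∃ (m : ℕ → ℕ) (h : ℕ → ℕ → (X →L[ℝ] ℝ)) (S : X →L[ℝ] Xd),
        StrictMono m ∧ 0 < m 0 ∧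
        (∀ z : X, Tendsto (fun n => ∑ i ∈ Finset.range (m n), h n i z • e i)
          atTop (nhds (S z))) ∧
        (∀ z : X, Tendsto (fun n => ∑ i ∈ Finset.range (m n), h n i z • x i)
          atTop (nhds (P z))))) ∧
    -- (b) ↔ (c)
    ((∃ (m : ℕ → ℕ) (h : ℕ → ℕ → (X →L[ℝ] ℝ)) (S : X →L[ℝ] Xd),
        StrictMono m ∧ 0 < m 0 ∧
        (∀ z : X, Tendsto (fun n => ∑ i ∈ Finset.range (m n), h n i z • e i)
          atTop (nhds (S z))) ∧
        (∀ z : X, Tendsto (fun n => ∑ i ∈ Finset.range (m n), h n i z • x i)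
          atTop (nhds (P z)))) ↔
      (∃ U : M →L[ℝ] Xd, T.comp (U.comp (P.codRestrict M hPmem)) = P)) := by
  have hTe : ∀ i, T (e i) = x i := by
    intro i
    refine tendsto_nhds_unique (hT (e i)) ?_
    have hev : ∀ᶠ N in atTop, (∑ n ∈ Finset.range N, coord n (e i) • x n) = x i := by
      filter_upwards [eventually_gt_atTop i] with N hN
      have hterm : ∀ n, coord n (e i) • x n = if n = i then x i else 0 := by
        intro n; rw [hcoord_e]; split <;> simp_all
      simp only [hterm]
      rw [Finset.sum_ite_eq' (Finset.range N) i]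
      simp [Finset.mem_range.mpr hN]
    exact Tendsto.congr' (hev.mono fun N hh => hh.symm) tendsto_const_nhds
  constructor
  · constructor
    · rintro ⟨m, h, S, hm, hm0, h1, h2⟩
      exact ⟨m, fun n i => (h n i).comp P, S.comp P, hm, hm0,
        fun z => by simpa using h1 (P z) (hPmem z),
        fun z => by simpa using h2 (P z) (hPmem z)⟩
    · rintro ⟨m, h, S, hm, hm0, h1, h2⟩
      refine ⟨m, h, S, hm, hm0, fun z _ => h1 z, fun z hz => ?_⟩
      have := h2 z
      rwa [hPid z hz] at this
  · constructor
    · rintro ⟨m, h, S, hm, hm0, h1, h2⟩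
      have hTS : ∀ z, T (S z) = P z := by
        intro z
        refine tendsto_nhds_unique ?_ (h2 z)
        have := (T.continuous.tendsto (S z)).comp (h1 z)
        refine this.congr fun n => ?_
        simp [map_sum, map_smul, hTe, Function.comp]
      refine ⟨S.comp M.subtypeL, ?_⟩
      ext z
      have : (M.subtypeL (P.codRestrict M hPmem z) : X) = P z := rfl
      simp only [ContinuousLinearMap.comp_apply, this, hTS (P z), hPid (P z) (hPmem z)]
    · rintro ⟨U, hU⟩
      set S := U.comp (P.codRestrict M hPmem) with hS
      have hTS : ∀ z, T (S z) = P z := by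
        intro z
        have := ContinuousLinearMap.ext_iff.mp hU z
        simpa using this
      refine ⟨fun n => n + 1, fun _ i => (coord i).comp S, S,
        fun a b hab => Nat.succ_lt_succ hab, Nat.one_pos, ?_, ?_⟩
      · intro z
        exact ((hbasis (S z)).comp (tendsto_add_atTop_nat 1)).congr fun n => by
          simp [Function.comp]
      · intro z
        have h3 : Tendsto (fun n => ∑ i ∈ Finset.range (n + 1),
            ((coord i).comp S) z • x i) atTop (nhds (T (S z))) :=
          ((hT (S z)).comp (tendsto_add_atTop_nat 1)).congr (fun n => by simp [Function.comp])
        rwa [hTS z] at h3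
end

section
/- Let {x_n} be a frame for X with respect to X_d and suppose there exists an approximative X_d-Bessel sequence {h_{n,i}} such that x = lim_{n→∞} Σ_{i=1}^{m_n} h_{n,i}(x) x_i for all x ∈ X. Then every complemented closed subspace M of X has an approximative family of local atoms: namely, with P a projection onto M, the sequence {P(x_n)} is a frame for M, a Bessel sequence for X, and there exists an approximative X_d-Bessel sequence {f_{n,i}} for M such that x = lim_{n→∞} Σ_{i=1}^{m_n} f_{n,i}(x) P(x_i) for all x ∈ M. -/
open Filter Topology

/- STATEMENT 16: Let {x_n} be a frame for X with respect to Xd (synthesis operator T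
   bounded and onto) admitting an approximative Xd-Bessel sequence {h_{n,i}} with
   x = lim_n Σ_{i=1}^{m_n} h_{n,i}(x) x_i for all x ∈ X.  Then every complemented
   closed subspace M of X (with continuous projection P onto M) has an approximative
   family of local atoms: {P x_n} is a Bessel sequence for X which is a frame for M,
   and there is an approximative Xd-Bessel sequence {f_{n,i}} for M with
   x = lim_n Σ_{i=1}^{m_n} f_{n,i}(x) P(x_i) for all x ∈ M. -/
theorem stmt16 {X Xd : Type*}
    [NormedAddCommGroup X] [NormedSpace ℝ X] [CompleteSpace X]
    [NormedAddCommGroup Xd] [NormedSpace ℝ Xd] [CompleteSpace Xd]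
    (coord : ℕ → (Xd →L[ℝ] ℝ)) (e : ℕ → Xd)
    (hcoord_e : ∀ k n, coord k (e n) = if k = n then (1 : ℝ) else 0)
    (hbasis : ∀ c : Xd,
      Tendsto (fun N => ∑ k ∈ Finset.range N, coord k c • e k) atTop (nhds c))
    (x : ℕ → X)
    -- {x_n} is a frame: the synthesis operator T is bounded and onto
    (T : Xd →L[ℝ] X)
    (hT : ∀ c : Xd,
      Tendsto (fun N => ∑ n ∈ Finset.range N, coord n c • x n) atTop (nhds (T c)))
    (hTonto : Function.Surjective T)
    -- an approximative Xd-Bessel sequence {h_{n,i}} reconstructing the identity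
    (m : ℕ → ℕ) (hm : StrictMono m) (hm0 : 0 < m 0)
    (h : ℕ → ℕ → (X →L[ℝ] ℝ)) (S : X →L[ℝ] Xd)
    (hS : ∀ z : X,
      Tendsto (fun n => ∑ i ∈ Finset.range (m n), h n i z • e i) atTop (nhds (S z)))
    (hexp : ∀ z : X,
      Tendsto (fun n => ∑ i ∈ Finset.range (m n), h n i z • x i) atTop (nhds z))
    -- M a complemented closed subspace with continuous projection P onto M
    (M : Submodule ℝ X) (hM : IsClosed (M : Set X))
    (P : X →L[ℝ] X) (hPmem : ∀ z : X, P z ∈ M) (hPid : ∀ z ∈ M, P z = z) :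
    -- {P(x_n)} is a Bessel sequence for X with respect to Xd
    (∃ B : ℝ, 0 < B ∧ ∀ f : X →L[ℝ] ℝ, ∃ g : Xd →L[ℝ] ℝ,
        (∀ n, g (e n) = f (P (x n))) ∧ ‖g‖ ≤ B * ‖f‖) ∧
    -- {P(x_n)} is a frame for M: lower frame inequality on M*
    (∃ A : ℝ, 0 < A ∧ ∀ (f : X →L[ℝ] ℝ) (g : Xd →L[ℝ] ℝ),
        (∀ n, g (e n) = f (P (x n))) → A * ‖f.comp M.subtypeL‖ ≤ ‖g‖) ∧
    -- M has an approximative family of local atoms {P(x_n)}, {f_{n,i}}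
    (∃ (m' : ℕ → ℕ) (f : ℕ → ℕ → (X →L[ℝ] ℝ)) (S' : X →L[ℝ] Xd),
      StrictMono m' ∧ 0 < m' 0 ∧
      (∀ z ∈ M, Tendsto (fun n => ∑ i ∈ Finset.range (m' n), f n i z • e i)
        atTop (nhds (S' z))) ∧
      (∀ z ∈ M, Tendsto (fun n => ∑ i ∈ Finset.range (m' n), f n i z • P (x i))
        atTop (nhds z))) := by

  -- T sends e n to x n
  have hTe : ∀ n, T (e n) = x n := by
    intro n
    have h3 : Tendsto (fun N => ∑ k ∈ Finset.range N, coord k (e n) • x k)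
        atTop (nhds (x n)) := by
      apply Tendsto.congr' _ tendsto_const_nhds
      filter_upwards [eventually_gt_atTop n] with N hN
      rw [Finset.sum_eq_single n]
      · simp [hcoord_e]
      · intro b _ hbn; simp [hcoord_e, hbn]
      · intro hn; exact absurd (Finset.mem_range.2 hN) hn
    exact tendsto_nhds_unique (hT (e n)) h3
  -- any g agreeing on the basis equals f ∘ P ∘ T
  have key : ∀ (f : X →L[ℝ] ℝ) (g : Xd →L[ℝ] ℝ),
      (∀ n, g (e n) = f (P (x n))) → ∀ c, g c = f (P (T c)) := by
    intro f g hg c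
    have h1 : Tendsto (fun N => g (∑ k ∈ Finset.range N, coord k c • e k))
        atTop (nhds (g c)) := (g.continuous.tendsto _).comp (hbasis c)
    have h2 : Tendsto (fun N => ((f.comp P) : X →L[ℝ] ℝ)
        (∑ k ∈ Finset.range N, coord k c • x k)) atTop (nhds (f (P (T c)))) :=
      ((f.comp P).continuous.tendsto _).comp (hT c)
    have h3 : (fun N => g (∑ k ∈ Finset.range N, coord k c • e k)) =
        fun N => ((f.comp P) : X →L[ℝ] ℝ) (∑ k ∈ Finset.range N, coord k c • x k) := by
      funext N
      simp [map_sum, map_smul, hg]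
    exact tendsto_nhds_unique h1 (h3 ▸ h2)
  refine ⟨⟨‖P‖ * ‖T‖ + 1, by positivity, fun f => ⟨(f.comp P).comp T, fun n => by
      simp [hTe], ?_⟩⟩, ?_, ?_⟩
  · calc ‖(f.comp P).comp T‖ ≤ ‖f.comp P‖ * ‖T‖ :=
          ContinuousLinearMap.opNorm_comp_le _ _
      _ ≤ (‖f‖ * ‖P‖) * ‖T‖ := by
          gcongr; exact ContinuousLinearMap.opNorm_comp_le _ _
      _ ≤ (‖P‖ * ‖T‖ + 1) * ‖f‖ := by
          nlinarith [norm_nonneg f, norm_nonneg P, norm_nonneg T]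
  · obtain ⟨C, hC, hCpre⟩ := T.exists_preimage_norm_le hTonto
    refine ⟨C⁻¹, by positivity, fun f g hg => ?_⟩
    rw [inv_mul_le_iff₀ hC]
    refine ContinuousLinearMap.opNorm_le_bound _ (by positivity) fun z => ?_
    obtain ⟨c, hc1, hc2⟩ := hCpre (z : X)
    have : f (M.subtypeL z) = g c := by
      simp only [Submodule.subtypeL_apply]
      rw [key f g hg c, hc1, hPid _ z.2]
    rw [ContinuousLinearMap.comp_apply, this]
    calc ‖g c‖ ≤ ‖g‖ * ‖c‖ := g.le_opNorm c
      _ ≤ ‖g‖ * (C * ‖(z : X)‖) := by gcongr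
      _ = C * ‖g‖ * ‖z‖ := by rw [Submodule.norm_coe]; ring
  · refine ⟨m, fun n i => (h n i).comp P, S.comp P, hm, hm0, fun z hz => ?_, fun z hz => ?_⟩
    · simpa using hS (P z)
    · have h1 : Tendsto (fun n => P (∑ i ∈ Finset.range (m n), h n (i) (P z) • x i))
          atTop (nhds (P (P z))) := (P.continuous.tendsto _).comp (hexp (P z))
      have h2 : P (P z) = z := by rw [hPid _ (hPmem z), hPid _ hz]
      rw [h2] at h1
      refine h1.congr fun n => ?_
      simp [map_sum, map_smul]
end
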